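/- Let θ ∈ [2π/3, π], let u, v ∈ ℝ² be unit vectors with ⟪u,v⟫ = cos θ, and let M'(u,v) = {p ∈ ℝ² : ‖p‖ ≤ 1, ⟪p,u⟫ ≤ 1/2, ⟪p,v⟫ ≤ 1/2}. Then volume(M'(u,v)) = π/3 + √3/2; in particular this area is independent of θ and equals the area of M. -/

import Mathlib

open Metric MeasureTheory Real
open scoped ENNReal RealInnerProductSpace

noncomputable section

/-- The Euclidean plane. -/
abbrev Pt := EuclideanSpace ℝ (Fin 2)

/-- The set `M'(u,v)`: the closed unit disk truncated by two non-crossing chords of length `√3`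
whose bounding half-planes have inward normals `u` and `v`. -/
def M' (u v : Pt) : Set Pt := {p | ‖p‖ ≤ 1 ∧ ⟪p, u⟫ ≤ 1 / 2 ∧ ⟪p, v⟫ ≤ 1 / 2}

namespace VolM'Aux

/-- Antiderivative of `√(1 - x²)`. -/
def F (x : ℝ) : ℝ := (Real.arcsin x + x * Real.sqrt (1 - x ^ 2)) / 2

lemma hasDerivAt_F {x : ℝ} (hx : x ∈ Set.Ioo (-1 : ℝ) 1) :
    HasDerivAt F (Real.sqrt (1 - x ^ 2)) x := by
  obtain ⟨hx1, hx2⟩ := hx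
  have h1 : x ≠ -1 := ne_of_gt hx1
  have h2 : x ≠ 1 := ne_of_lt hx2
  have hpos : 0 < 1 - x ^ 2 := by nlinarith
  have hs : Real.sqrt (1 - x ^ 2) > 0 := Real.sqrt_pos.2 hpos
  have hsq : Real.sqrt (1 - x ^ 2) ^ 2 = 1 - x ^ 2 := Real.sq_sqrt hpos.le
  have hd1 : HasDerivAt Real.arcsin (1 / Real.sqrt (1 - x ^ 2)) x :=
    Real.hasDerivAt_arcsin h1 h2
  have hd2 : HasDerivAt (fun y : ℝ => 1 - y ^ 2) (-(2 * x)) x := by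
    simpa using ((hasDerivAt_pow 2 x).const_sub 1)
  have hd3 : HasDerivAt (fun y : ℝ => Real.sqrt (1 - y ^ 2))
      (1 / (2 * Real.sqrt (1 - x ^ 2)) * (-(2 * x))) x :=
    (Real.hasDerivAt_sqrt (ne_of_gt hpos)).comp x hd2
  have hd4 : HasDerivAt (fun y : ℝ => y * Real.sqrt (1 - y ^ 2))
      (1 * Real.sqrt (1 - x ^ 2) + x * (1 / (2 * Real.sqrt (1 - x ^ 2)) * (-(2 * x)))) x :=
    (hasDerivAt_id x).mul hd3
  have hd5 := (hd1.add hd4).div_const 2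
  refine hd5.congr_deriv ?_
  symm
  field_simp
  nlinarith [hs, hsq]

lemma cont_sqrt : Continuous (fun x : ℝ => Real.sqrt (1 - x ^ 2)) :=
  Real.continuous_sqrt.comp (by continuity)

lemma integral_sqrt (a b : ℝ) (ha : -1 ≤ a) (hb : b ≤ 1) (hab : a ≤ b) :
    ∫ x in a..b, Real.sqrt (1 - x ^ 2) = F b - F a := by
  apply intervalIntegral.integral_eq_sub_of_hasDeriv_right_of_le hab
  · apply Continuous.continuousOn
    unfold F
    have := cont_sqrt
    continuity
  · intro x hx
    exact (hasDerivAt_F ⟨lt_of_le_of_lt ha hx.1, lt_of_lt_of_le hx.2 hb⟩).hasDerivWithinAt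
  · exact cont_sqrt.intervalIntegrable a b

lemma sqrt_three_quarters : Real.sqrt (3 / 4) = Real.sqrt 3 / 2 := by
  rw [show (3 / 4 : ℝ) = 3 * (1 / 2) ^ 2 by norm_num,
    Real.sqrt_mul (by norm_num : (0:ℝ) ≤ 3), Real.sqrt_sq (by norm_num : (0:ℝ) ≤ 1 / 2)]
  ring

lemma arcsin_half : Real.arcsin (1 / 2) = π / 6 := by
  rw [← Real.sin_pi_div_six, Real.arcsin_sin (by linarith [Real.pi_pos])
    (by linarith [Real.pi_pos])]

lemma F_one : F 1 = π / 4 := by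
  simp [F, Real.arcsin_one]
  ring

lemma F_half : F (1 / 2) = π / 12 + Real.sqrt 3 / 8 := by
  have : (1 : ℝ) - (1 / 2) ^ 2 = 3 / 4 := by norm_num
  rw [F, this, sqrt_three_quarters, arcsin_half]
  ring

/-- The volume of a vertical slab of the closed unit disk in `ℝ × ℝ`. -/
lemma volume_slab (a b : ℝ) (ha : -1 ≤ a) (hb : b ≤ 1) (hab : a ≤ b) :
    volume {p : ℝ × ℝ | p.1 ^ 2 + p.2 ^ 2 ≤ 1 ∧ a < p.1 ∧ p.1 ≤ b}
      = ENNReal.ofReal (∫ x in a..b, 2 * Real.sqrt (1 - x ^ 2)) := by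
  set S : Set (ℝ × ℝ) := {p : ℝ × ℝ | p.1 ^ 2 + p.2 ^ 2 ≤ 1 ∧ a < p.1 ∧ p.1 ≤ b} with hS
  have hSm : MeasurableSet S := by
    apply MeasurableSet.inter
    · exact measurableSet_le ((continuous_fst.pow 2).add (continuous_snd.pow 2)).measurable
        measurable_const
    · exact MeasurableSet.inter (measurableSet_lt measurable_const measurable_fst)
        (measurableSet_le measurable_fst measurable_const)
  have slice : ∀ x : ℝ, volume (Prod.mk x ⁻¹' S)
      = (Set.Ioc a b).indicator (fun x => ENNReal.ofReal (2 * Real.sqrt (1 - x ^ 2))) x := by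
    intro x
    by_cases hx : x ∈ Set.Ioc a b
    · have hx2 : (0:ℝ) ≤ 1 - x ^ 2 := by
        have h1 : -1 ≤ x := le_trans ha hx.1.le
        have h2 : x ≤ 1 := le_trans hx.2 hb
        nlinarith
      have h1 : Prod.mk x ⁻¹' S
          = Set.Icc (-Real.sqrt (1 - x ^ 2)) (Real.sqrt (1 - x ^ 2)) := by
        ext y
        simp only [hS, Set.mem_preimage, Set.mem_setOf_eq, Set.mem_Icc]
        constructor
        · rintro ⟨h, -, -⟩
          exact (Real.sq_le hx2).1 (by linarith)
        · intro h
          refine ⟨by nlinarith [(Real.sq_le hx2).2 h], hx.1, hx.2⟩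
      rw [h1, Real.volume_Icc, Set.indicator_of_mem hx]
      congr 1
      ring
    · have h1 : Prod.mk x ⁻¹' S = ∅ := by
        ext y
        simp only [hS, Set.mem_preimage, Set.mem_setOf_eq, Set.mem_empty_iff_false, iff_false]
        rintro ⟨-, h2, h3⟩
        exact hx ⟨h2, h3⟩
      rw [h1, Set.indicator_of_notMem hx]
      simp
  rw [MeasureTheory.Measure.volume_eq_prod ℝ ℝ, MeasureTheory.Measure.prod_apply hSm]
  simp_rw [slice]
  rw [lintegral_indicator measurableSet_Ioc,
    ← MeasureTheory.ofReal_integral_eq_lintegral_ofReal (f := fun x => 2 * Real.sqrt (1 - x ^ 2))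
      ((continuous_const.mul cont_sqrt : Continuous fun x : ℝ => 2 * Real.sqrt (1 - x ^ 2)).integrableOn_Ioc)
      (Filter.Eventually.of_forall fun x => by positivity),
    intervalIntegral.integral_of_le hab]

lemma volume_disk_plane :
    volume {p : ℝ × ℝ | p.1 ^ 2 + p.2 ^ 2 ≤ 1} = ENNReal.ofReal π := by
  have h1 : {p : ℝ × ℝ | p.1 ^ 2 + p.2 ^ 2 ≤ 1}
      = {p : ℝ × ℝ | p.1 ^ 2 + p.2 ^ 2 ≤ 1 ∧ -1 < p.1 ∧ p.1 ≤ 1} ∪ {((-1 : ℝ), (0 : ℝ))} := by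
    ext p
    simp only [Set.mem_setOf_eq, Set.mem_union, Set.mem_singleton_iff]
    constructor
    · intro h
      rcases eq_or_lt_of_le (by nlinarith : (-1:ℝ) ≤ p.1) with heq | hlt
      · right
        have : p.2 = 0 := by nlinarith
        exact Prod.ext heq.symm this
      · left; exact ⟨h, hlt, by nlinarith⟩
    · rintro (⟨h, -⟩ | h)
      · exact h
      · rw [h]; norm_num
  have h2 : volume ({((-1 : ℝ), (0 : ℝ))} : Set (ℝ × ℝ)) = 0 := by
    rw [← Set.singleton_prod_singleton, MeasureTheory.Measure.volume_eq_prod ℝ ℝ,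
      MeasureTheory.Measure.prod_prod]
    simp
  have h3 : volume {p : ℝ × ℝ | p.1 ^ 2 + p.2 ^ 2 ≤ 1}
      = volume {p : ℝ × ℝ | p.1 ^ 2 + p.2 ^ 2 ≤ 1 ∧ -1 < p.1 ∧ p.1 ≤ 1} := by
    apply le_antisymm
    · rw [h1]
      exact (measure_union_le _ _).trans (by rw [h2, add_zero])
    · exact measure_mono fun p hp => hp.1
  rw [h3, volume_slab (-1) 1 le_rfl le_rfl (by norm_num)]
  congr 1
  rw [intervalIntegral.integral_const_mul, integral_sqrt_one_sub_sq]
  ring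

lemma volume_cap_plane :
    volume {p : ℝ × ℝ | p.1 ^ 2 + p.2 ^ 2 ≤ 1 ∧ 1 / 2 < p.1}
      = ENNReal.ofReal (π / 3 - Real.sqrt 3 / 4) := by
  have h1 : {p : ℝ × ℝ | p.1 ^ 2 + p.2 ^ 2 ≤ 1 ∧ 1 / 2 < p.1}
      = {p : ℝ × ℝ | p.1 ^ 2 + p.2 ^ 2 ≤ 1 ∧ 1 / 2 < p.1 ∧ p.1 ≤ 1} := by
    ext p
    simp only [Set.mem_setOf_eq]
    exact ⟨fun h => ⟨h.1, h.2, by nlinarith [h.1, sq_nonneg p.2]⟩, fun h => ⟨h.1, h.2.1⟩⟩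
  rw [h1, volume_slab (1 / 2) 1 (by norm_num) le_rfl (by norm_num)]
  congr 1
  rw [intervalIntegral.integral_const_mul, integral_sqrt (1/2) 1 (by norm_num) le_rfl (by norm_num),
    F_one, F_half]
  ring

/-- The coordinate map `Pt → ℝ × ℝ` is measure preserving. -/
lemma measurePreserving_coords :
    MeasurePreserving (fun q : Pt => (q 0, q 1)) volume volume :=
  (MeasureTheory.volume_preserving_finTwoArrow ℝ).comp
    (EuclideanSpace.volume_preserving_symm_measurableEquiv_toLp (Fin 2))

lemma measurable_coord (i : Fin 2) : Measurable fun q : Pt => q i :=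
  (measurable_pi_apply i).comp (MeasurableEquiv.toLp 2 (Fin 2 → ℝ)).symm.measurable

lemma measurable_norm_le : MeasurableSet {q : Pt | ‖q‖ ≤ 1} :=
  measurableSet_le continuous_norm.measurable measurable_const

lemma continuous_inner_right (u : Pt) : Continuous fun p : Pt => ⟪p, u⟫ :=
  continuous_id.inner continuous_const

lemma norm_le_one_iff (q : Pt) : ‖q‖ ≤ 1 ↔ q 0 ^ 2 + q 1 ^ 2 ≤ 1 := by
  rw [EuclideanSpace.norm_eq]
  simp only [Real.norm_eq_abs, sq_abs, Fin.sum_univ_two]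
  exact Real.sqrt_le_one

/-- Volume of the circular cap with inner normal `u` in `Pt`. -/
lemma volume_cap (u : Pt) (hu : ‖u‖ = 1) :
    volume {p : Pt | ‖p‖ ≤ 1 ∧ 1 / 2 < ⟪p, u⟫}
      = ENNReal.ofReal (π / 3 - Real.sqrt 3 / 4) := by
  -- get an orthonormal basis whose first vector is `u`
  have hcard : Module.finrank ℝ Pt = Fintype.card (Fin 2) := by simp
  have horth : Orthonormal ℝ (Set.restrict ({0} : Set (Fin 2)) ![u, u]) := by
    constructor
    · rintro ⟨i, hi⟩
      simp only [Set.mem_singleton_iff] at hi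
      subst hi
      exact hu
    · rintro ⟨i, hi⟩ ⟨j, hj⟩ hij
      exfalso
      simp only [Set.mem_singleton_iff] at hi hj
      exact hij (by subst hi; subst hj; rfl)
  obtain ⟨b, hb⟩ := horth.exists_orthonormalBasis_extension_of_card_eq hcard
  have hb0 : b 0 = u := by simpa using hb 0 rfl
  have hset : {p : Pt | ‖p‖ ≤ 1 ∧ 1 / 2 < ⟪p, u⟫}
      = b.repr ⁻¹' {q : Pt | ‖q‖ ≤ 1 ∧ 1 / 2 < q 0} := by
    ext p
    simp only [Set.mem_setOf_eq, Set.mem_preimage]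
    rw [b.repr.norm_map, OrthonormalBasis.repr_apply_apply, hb0, real_inner_comm]
  have hmeas : MeasurableSet {q : Pt | ‖q‖ ≤ 1 ∧ 1 / 2 < q 0} :=
    measurable_norm_le.inter (measurableSet_lt measurable_const (measurable_coord 0))
  rw [hset, b.measurePreserving_repr.measure_preimage hmeas.nullMeasurableSet]
  have hset2 : {q : Pt | ‖q‖ ≤ 1 ∧ 1 / 2 < q 0}
      = (fun q : Pt => (q 0, q 1)) ⁻¹' {p : ℝ × ℝ | p.1 ^ 2 + p.2 ^ 2 ≤ 1 ∧ 1 / 2 < p.1} := by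
    ext q
    simp only [Set.mem_setOf_eq, Set.mem_preimage, norm_le_one_iff]
  have hm2 : MeasurableSet {p : ℝ × ℝ | p.1 ^ 2 + p.2 ^ 2 ≤ 1 ∧ 1 / 2 < p.1} :=
    (measurableSet_le ((continuous_fst.pow 2).add (continuous_snd.pow 2)).measurable
      measurable_const).inter (measurableSet_lt measurable_const measurable_fst)
  rw [hset2, measurePreserving_coords.measure_preimage hm2.nullMeasurableSet, volume_cap_plane]

/-- Volume of the closed unit disk in `Pt`. -/
lemma volume_disk : volume {p : Pt | ‖p‖ ≤ 1} = ENNReal.ofReal π := by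
  have hset2 : {q : Pt | ‖q‖ ≤ 1}
      = (fun q : Pt => (q 0, q 1)) ⁻¹' {p : ℝ × ℝ | p.1 ^ 2 + p.2 ^ 2 ≤ 1} := by
    ext q
    simp only [Set.mem_setOf_eq, Set.mem_preimage, norm_le_one_iff]
  have hm2 : MeasurableSet {p : ℝ × ℝ | p.1 ^ 2 + p.2 ^ 2 ≤ 1} :=
    measurableSet_le ((continuous_fst.pow 2).add (continuous_snd.pow 2)).measurable
      measurable_const
  rw [hset2, measurePreserving_coords.measure_preimage hm2.nullMeasurableSet, volume_disk_plane]

lemma sqrt3_lt_two : Real.sqrt 3 < 2 := by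
  nlinarith [Real.sq_sqrt (by norm_num : (0:ℝ) ≤ 3), Real.sqrt_nonneg 3]

end VolM'Aux

/-- The area of `M'(u,v)` is `π/3 + √3/2`, independently of the angle `θ ∈ [2π/3, π]` between
the normals `u` and `v`. -/
theorem volume_M' (θ : ℝ) (hθ : θ ∈ Set.Icc (2 * π / 3) π) (u v : Pt)
    (hu : ‖u‖ = 1) (hv : ‖v‖ = 1) (huv : ⟪u, v⟫ = Real.cos θ) :
    volume (M' u v) = ENNReal.ofReal (π / 3 + Real.sqrt 3 / 2) := by
  set A := {p : Pt | ‖p‖ ≤ 1 ∧ 1 / 2 < ⟪p, u⟫} with hA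
  set B := {p : Pt | ‖p‖ ≤ 1 ∧ 1 / 2 < ⟪p, v⟫} with hB
  -- `cos θ ≤ -1/2`
  have hcos : Real.cos θ ≤ -(1/2) := by
    have h1 : Real.cos θ ≤ Real.cos (2 * π / 3) :=
      Real.cos_le_cos_of_nonneg_of_le_pi (by positivity) hθ.2 hθ.1
    have h2 : Real.cos (2 * π / 3) = -(1/2) := by
      rw [show 2 * π / 3 = π - π / 3 by ring, Real.cos_pi_sub, Real.cos_pi_div_three]
    linarith
  -- `‖u + v‖ ≤ 1`
  have hnuv : ‖u + v‖ ≤ 1 := by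
    have h1 : ‖u + v‖ ^ 2 = 2 + 2 * Real.cos θ := by
      have h' : ⟪v, u⟫ = Real.cos θ := (real_inner_comm u v).trans huv
      rw [← real_inner_self_eq_norm_sq, inner_add_add_self, real_inner_self_eq_norm_sq,
        real_inner_self_eq_norm_sq, hu, hv, huv, h']
      ring
    nlinarith [norm_nonneg (u + v)]
  -- `A` and `B` are disjoint
  have hABdisj : Disjoint A B := by
    rw [Set.disjoint_left]
    rintro p ⟨hp1, hp2⟩ ⟨-, hp3⟩
    have h1 : ⟪p, u + v⟫ = ⟪p, u⟫ + ⟪p, v⟫ := inner_add_right p u v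
    have h2 : ⟪p, u + v⟫ ≤ ‖p‖ * ‖u + v‖ := real_inner_le_norm p (u + v)
    nlinarith [norm_nonneg (u + v), norm_nonneg p]
  -- decomposition of the disk
  have hdecomp : {p : Pt | ‖p‖ ≤ 1} = (M' u v ∪ A) ∪ B := by
    ext p
    simp only [Set.mem_setOf_eq, Set.mem_union, hA, hB, M', Set.mem_setOf_eq]
    constructor
    · intro h
      rcases le_or_gt (⟪p, u⟫) (1/2) with h1 | h1
      · rcases le_or_gt (⟪p, v⟫) (1/2) with h2 | h2
        · exact Or.inl (Or.inl ⟨h, by linarith, by linarith⟩)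
        · exact Or.inr ⟨h, h2⟩
      · exact Or.inl (Or.inr ⟨h, h1⟩)
    · rintro ((⟨h, -⟩ | ⟨h, -⟩) | ⟨h, -⟩) <;> exact h
  -- measurability
  have hAm : MeasurableSet A :=
    VolM'Aux.measurable_norm_le.inter
      (measurableSet_lt measurable_const (VolM'Aux.continuous_inner_right u).measurable)
  have hBm : MeasurableSet B :=
    VolM'Aux.measurable_norm_le.inter
      (measurableSet_lt measurable_const (VolM'Aux.continuous_inner_right v).measurable)
  -- disjointness of `M'` with the caps
  have hMA : Disjoint (M' u v) A := by
    rw [Set.disjoint_left]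
    rintro p ⟨-, hp2, -⟩ ⟨-, hp3⟩
    linarith
  have hMAB : Disjoint (M' u v ∪ A) B := by
    rw [Set.disjoint_union_left]
    refine ⟨?_, hABdisj⟩
    rw [Set.disjoint_left]
    rintro p ⟨-, -, hp2⟩ ⟨-, hp3⟩
    linarith
  have hvol : volume {p : Pt | ‖p‖ ≤ 1} = volume (M' u v) + volume A + volume B := by
    rw [hdecomp, measure_union hMAB hBm, measure_union hMA hAm]
  rw [VolM'Aux.volume_disk, VolM'Aux.volume_cap u hu, VolM'Aux.volume_cap v hv] at hvol
  have hc : (0:ℝ) ≤ π / 3 - Real.sqrt 3 / 4 := by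
    nlinarith [Real.pi_gt_three, VolM'Aux.sqrt3_lt_two]
  have key : ENNReal.ofReal π
      = ENNReal.ofReal (π / 3 + Real.sqrt 3 / 2) + ENNReal.ofReal (π / 3 - Real.sqrt 3 / 4)
        + ENNReal.ofReal (π / 3 - Real.sqrt 3 / 4) := by
    rw [← ENNReal.ofReal_add (by positivity) hc, ← ENNReal.ofReal_add (by positivity) hc]
    congr 1
    ring
  rw [key] at hvol
  have hfin : ENNReal.ofReal (π / 3 - Real.sqrt 3 / 4) ≠ ∞ := ENNReal.ofReal_ne_top
  have h1 := WithTop.add_right_cancel hfin hvol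
  exact (WithTop.add_right_cancel hfin h1).symm
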